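/- The de Rham differential Q is an odd derivation of the algebra of forms: for every x ∈ P that is homogeneous of Grassmann parity p (i.e. x lies in the image of MvPolynomial (Fin n) ℝ ⊗ (evenOdd p submodule of Λ)) and every z ∈ P, one has Q(x * z) = Q(x) * z + (-1)^p · x * Q(z). -/

import Mathlib

open TensorProduct

noncomputable section

/-- The Grassmann algebra on `n` odd generators `ξ^α`. -/
abbrev Lam (n : ℕ) : Type := ExteriorAlgebra ℝ (Fin n → ℝ)

/-- The odd coordinate `ξ^α`, i.e. the generator `e_α = ι (Pi.single α 1)`. -/
def gen {n : ℕ} (α : Fin n) : Lam n := ExteriorAlgebra.ι ℝ (Pi.single α 1)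

/-- The odd partial derivative `∂/∂ξ^α`: left contraction with the `α`-th
coordinate functional, the unique antiderivation sending `e_β` to `δ_{αβ}`. -/
def pd {n : ℕ} (α : Fin n) : Lam n →ₗ[ℝ] Lam n :=
  CliffordAlgebra.contractLeft (Q := (0 : QuadraticForm ℝ (Fin n → ℝ))) (LinearMap.proj α)

/-- The algebra of (pseudo)differential forms on `ℝ^{0|n}`:
polynomials in the even fiber coordinates `y^α` with Grassmann coefficients. -/
abbrev Forms (n : ℕ) : Type := MvPolynomial (Fin n) ℝ ⊗[ℝ] Lam n

/-- The de Rham differential `Q = y^α ∂_{ξ^α}`. -/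
def deRham (n : ℕ) : Forms n →ₗ[ℝ] Forms n :=
  ∑ α : Fin n, TensorProduct.map (LinearMap.mulLeft ℝ (MvPolynomial.X α)) (pd α)



section aux
open CliffordAlgebra
variable {R M : Type*} [CommRing R] [AddCommGroup M] [Module R M] {Q : QuadraticForm R M}

lemma contract_even (d : Module.Dual R M) (m : CliffordAlgebra Q) (hm : m ∈ evenOdd Q 0)
    (w : CliffordAlgebra Q) :
    contractLeft d (m * w) = contractLeft d m * w + m * contractLeft d w := by
  induction m, hm using even_induction with
  | algebraMap r =>
    simp [contractLeft_algebraMap_mul, contractLeft_algebraMap, Algebra.smul_def]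
  | add a b ha hb iha ihb =>
    simp only [add_mul, map_add, iha, ihb]; abel
  | ι_mul_ι_mul m₁ m₂ a ha ih =>
    simp only [mul_assoc, contractLeft_ι_mul, ih, mul_sub, mul_add, smul_sub, smul_add,
      sub_mul, smul_mul_assoc, mul_smul_comm, map_sub, map_smul]
    abel

lemma contract_odd (d : Module.Dual R M) (m : CliffordAlgebra Q) (hm : m ∈ evenOdd Q 1)
    (w : CliffordAlgebra Q) :
    contractLeft d (m * w) = contractLeft d m * w - m * contractLeft d w := by
  induction m, hm using odd_induction with
  | ι v =>
    simp [contractLeft_ι_mul, contractLeft_ι, Algebra.smul_def]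
  | add a b ha hb iha ihb =>
    simp only [add_mul, map_add, iha, ihb]; abel
  | ι_mul_ι_mul m₁ m₂ a ha ih =>
    simp only [mul_assoc, contractLeft_ι_mul, ih, mul_sub, mul_add, smul_sub, smul_add,
      sub_mul, smul_mul_assoc, mul_smul_comm, map_sub, map_smul]
    abel

lemma contract_evenOdd (d : Module.Dual R M) (p : ZMod 2) (m : CliffordAlgebra Q)
    (hm : m ∈ evenOdd Q p) (w : CliffordAlgebra Q) :
    contractLeft d (m * w)
      = contractLeft d m * w + ((-1 : R) ^ p.val) • (m * contractLeft d w) := by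
  fin_cases p
  · show contractLeft d (m * w)
      = contractLeft d m * w + ((-1 : R) ^ (0 : ZMod 2).val) • (m * contractLeft d w)
    simpa using contract_even d m hm w
  · show contractLeft d (m * w)
      = contractLeft d m * w + ((-1 : R) ^ (1 : ZMod 2).val) • (m * contractLeft d w)
    simpa [sub_eq_add_neg, ZMod.val_one, neg_smul] using contract_odd d m hm w
end aux

set_option maxHeartbeats 2000000 in
set_option synthInstance.maxHeartbeats 1000000 in
/-- The de Rham differential is an odd derivation: on a form `x` whose Grassmann factor
is homogeneous of parity `p`, `Q(x*z) = Q(x)*z + (-1)^p x * Q(z)`. -/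
theorem deRham_odd_derivation (n : ℕ) (hn : 1 ≤ n) (p : ZMod 2) (x : Forms n)
    (hx : x ∈ LinearMap.range (TensorProduct.map
      (LinearMap.id : MvPolynomial (Fin n) ℝ →ₗ[ℝ] MvPolynomial (Fin n) ℝ)
      (CliffordAlgebra.evenOdd (0 : QuadraticForm ℝ (Fin n → ℝ)) p).subtype))
    (z : Forms n) :
    deRham n (x * z) = deRham n x * z + (-1 : ℝ) ^ p.val • (x * deRham n z) := by
  obtain ⟨y, rfl⟩ := hx
  induction y using TensorProduct.induction_on with
  | zero => simp
  | add a b ha hb =>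
    simp only [map_add, add_mul, ha, hb, smul_add]
    abel
  | tmul q m =>
    induction z using TensorProduct.induction_on with
    | zero => simp
    | add u v hu hv =>
      simp only [map_add, mul_add, hu, hv, smul_add]
      abel
    | tmul r w =>
      obtain ⟨m, hm⟩ := m
      simp only [TensorProduct.map_tmul, LinearMap.id_coe, id_eq, Submodule.coe_subtype,
        Algebra.TensorProduct.tmul_mul_tmul, deRham, LinearMap.sum_apply,
        LinearMap.mulLeft_apply]
      rw [Finset.sum_mul, Finset.mul_sum]
      simp only [Algebra.TensorProduct.tmul_mul_tmul]
      rw [Finset.smul_sum, ← Finset.sum_add_distrib]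
      refine Finset.sum_congr rfl fun α _ => ?_
      rw [show pd α (m * w) = pd α m * w + ((-1:ℝ)^p.val) • (m * pd α w) from
        contract_evenOdd _ p m hm w]
      rw [TensorProduct.tmul_add, TensorProduct.tmul_smul]
      congr 1
      · ring_nf
      · rw [TensorProduct.smul_tmul', TensorProduct.smul_tmul']
        congr 2
        ring
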